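/- arXiv:2407.07109 — 2 statements merged into one kernel-verified Lean document; each statement's English description precedes it below -/
import Mathlib

section
/- Let θ_n = arctan(√(F_n / F_{n+1})). Then the limit of θ_n as n → ∞ equals arctan(√(1/φ)), and moreover arctan(√(1/φ)) = √(1/φ) · ∑_{n=0}^{∞} (L_n − √5 · F_n) / (2(2n+1)), where L_n are the Lucas numbers. -/
open Real Filter

/-- The golden ratio φ = (1+√5)/2. -/
noncomputable def phi : ℝ := (1 + Real.sqrt 5) / 2

/-- The Lucas numbers: L 0 = 2, L 1 = 1, L (n+2) = L (n+1) + L n. -/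
def lucas : ℕ → ℕ
  | 0 => 2
  | 1 => 1
  | n + 2 => lucas (n + 1) + lucas n

/-- The acute angle of the n-th triangle of the Fibonacci–Theodorus spiral
opposite the leg √(F n): θ n = arctan (√(F n / F (n+1))). -/
noncomputable def theta (n : ℕ) : ℝ :=
  Real.arctan (Real.sqrt ((Nat.fib n : ℝ) / (Nat.fib (n + 1) : ℝ)))

lemma phi_eq : phi = goldenRatio := rfl

lemma lucas_binet (n : ℕ) : (lucas n : ℝ) = goldenRatio ^ n + goldenConj ^ n := by
  induction n using Nat.twoStepInduction with
  | zero => norm_num [lucas]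
  | one => simp [lucas, goldenRatio, goldenConj]
  | more n ih1 ih2 =>
    have h1 : goldenRatio ^ (n + 2) = goldenRatio ^ n * (goldenRatio + 1) := by
      rw [← goldenRatio_sq]; ring
    have h2 : goldenConj ^ (n + 2) = goldenConj ^ n * (goldenConj + 1) := by
      rw [← goldenConj_sq]; ring
    show ((lucas (n+1) + lucas n : ℕ) : ℝ) = _
    push_cast [ih1, ih2, h1, h2]
    ring

lemma fib_ratio_tendsto :
    Tendsto (fun n => (Nat.fib n : ℝ) / (Nat.fib (n + 1) : ℝ)) atTop (nhds (1 / goldenRatio)) := by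
  have key : ∀ n : ℕ, (Nat.fib n : ℝ) / (Nat.fib (n + 1) : ℝ) - 1 / goldenRatio
      = -(goldenConj ^ n) / (goldenRatio * (Nat.fib (n + 1) : ℝ)) := by
    intro n
    have hfib : (0 : ℝ) < (Nat.fib (n + 1) : ℝ) := by
      exact_mod_cast Nat.fib_pos.2 (Nat.succ_pos n)
    have h := fib_succ_sub_goldenRatio_mul_fib n
    rw [div_sub_div _ _ hfib.ne' goldenRatio_ne_zero,
      div_eq_div_iff (by positivity) (by positivity)]
    linear_combination (-(goldenRatio * (Nat.fib (n+1) : ℝ))) * h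
  have h0 : Tendsto (fun n : ℕ => (Nat.fib n : ℝ) / (Nat.fib (n + 1) : ℝ) - 1 / goldenRatio)
      atTop (nhds 0) := by
    have hb : Tendsto (fun n : ℕ => |goldenConj| ^ n) atTop (nhds 0) := by
      apply tendsto_pow_atTop_nhds_zero_of_lt_one (abs_nonneg _)
      rw [abs_lt]
      exact ⟨neg_one_lt_goldenConj, by linarith [goldenConj_neg]⟩
    refine squeeze_zero_norm (fun n => ?_) hb
    ·
      rw [key n]
      have hfib : (1 : ℝ) ≤ (Nat.fib (n + 1) : ℝ) := by
        exact_mod_cast Nat.fib_pos.2 (Nat.succ_pos n)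
      have hden : (1 : ℝ) ≤ goldenRatio * (Nat.fib (n + 1) : ℝ) := by
        nlinarith [one_lt_goldenRatio]
      rw [norm_div, norm_neg, norm_pow]
      calc ‖goldenConj‖ ^ n / ‖goldenRatio * (Nat.fib (n + 1) : ℝ)‖
          ≤ ‖goldenConj‖ ^ n / 1 := by
            apply div_le_div_of_nonneg_left (by positivity) one_pos
            rw [Real.norm_eq_abs, abs_of_nonneg (by linarith)]
            exact hden
        _ = |goldenConj| ^ n := by rw [div_one]; rfl
  have := h0.add_const (1 / goldenRatio)
  simpa using this

theorem angle_tendsto_arctan_and_series :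
    Filter.Tendsto theta Filter.atTop (nhds (Real.arctan (Real.sqrt (1 / phi)))) ∧
      Real.arctan (Real.sqrt (1 / phi)) =
        Real.sqrt (1 / phi) *
          ∑' n : ℕ, ((lucas n : ℝ) - Real.sqrt 5 * (Nat.fib n : ℝ)) / (2 * (2 * (n : ℝ) + 1)) := by
  constructor
  · have hc : Continuous fun y : ℝ => Real.arctan (Real.sqrt y) :=
      Real.continuous_arctan.comp Real.continuous_sqrt
    rw [phi_eq]
    exact (hc.tendsto (1 / goldenRatio)).comp fib_ratio_tendsto
  · set x : ℝ := Real.sqrt (1 / phi) with hx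
    have hphi_pos : (0 : ℝ) < phi := by rw [phi_eq]; exact goldenRatio_pos
    have hphi_gt : (1 : ℝ) < phi := by rw [phi_eq]; exact one_lt_goldenRatio
    have hxlt : ‖x‖ < 1 := by
      rw [hx, Real.norm_eq_abs, abs_of_nonneg (Real.sqrt_nonneg _)]
      have h1 : Real.sqrt (1 / phi) < Real.sqrt 1 :=
        Real.sqrt_lt_sqrt (by positivity) (by rw [div_lt_one hphi_pos]; exact hphi_gt)
      simpa using h1
    have hsum := Real.hasSum_arctan hxlt
    rw [← hsum.tsum_eq, ← tsum_mul_left]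
    apply tsum_congr
    intro n
    have hx2 : x ^ 2 = 1 / phi := Real.sq_sqrt (by positivity)
    have hterm : (-1 : ℝ) ^ n * x ^ (2 * n + 1) = x * goldenConj ^ n := by
      have h1 : goldenConj = -(1 / phi) := by
        rw [phi_eq, one_div, inv_goldenRatio, neg_neg]
      rw [h1, ← hx2, neg_pow]
      ring
    have hfib5 : Real.sqrt 5 * (Nat.fib n : ℝ) = goldenRatio ^ n - goldenConj ^ n := by
      rw [Real.coe_fib_eq]
      have h5 : Real.sqrt 5 ≠ 0 := by positivity
      field_simp
    have h2n : (2 * (n : ℝ) + 1) ≠ 0 := by positivity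
    calc (-1 : ℝ) ^ n * x ^ (2 * n + 1) / ((2 * n + 1 : ℕ) : ℝ)
        = (x * goldenConj ^ n) / ((2 * n + 1 : ℕ) : ℝ) := by rw [hterm]
      _ = x * (((lucas n : ℝ) - Real.sqrt 5 * (Nat.fib n : ℝ)) / (2 * (2 * (n : ℝ) + 1))) := by
          rw [lucas_binet, hfib5]
          push_cast
          field_simp
          ring
end

section
/- Let θ_n = arctan(√(F_n / F_{n+1})). Then for every positive integer n, 2π < ∑_{i=0}^{9} θ_{n+i} < 20π/9; that is, ten consecutive triangles of the Fibonacci–Theodorus spiral always turn through more than one full revolution (360°) but less than 400°. -/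
open Real Finset

/-- Taylor-type lower bound for arctan on nonnegative reals. -/
lemma arctan_lb_poly : ∀ x : ℝ, 0 ≤ x → x - x^3/3 + x^5/5 - x^7/7 ≤ Real.arctan x := by
  have key : Monotone (fun x : ℝ => Real.arctan x - (x - x^3/3 + x^5/5 - x^7/7)) := by
    have hd : ∀ x : ℝ, HasDerivAt (fun x : ℝ => Real.arctan x - (x - x^3/3 + x^5/5 - x^7/7))
        (1/(1+x^2) - (1 - x^2 + x^4 - x^6)) x := by
      intro x
      have h1 := Real.hasDerivAt_arctan x
      have h2 : HasDerivAt (fun x : ℝ => x - x^3/3 + x^5/5 - x^7/7)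
          (1 - x^2 + x^4 - x^6) x := by
        have := (((hasDerivAt_id x).sub (((hasDerivAt_pow 3 x)).div_const 3)).add
          ((hasDerivAt_pow 5 x).div_const 5)).sub ((hasDerivAt_pow 7 x).div_const 7)
        refine this.congr_deriv ?_
        norm_num
      exact h1.sub h2
    apply monotone_of_deriv_nonneg
    · exact fun x => (hd x).differentiableAt
    · intro x
      rw [(hd x).deriv]
      have h : 1/(1+x^2) - (1 - x^2 + x^4 - x^6) = x^8/(1+x^2) := by
        field_simp
        ring
      rw [h]
      positivity
  intro x hx
  have := key hx
  simp [Real.arctan_zero] at this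
  linarith

/-- Taylor-type upper bound for arctan on nonnegative reals. -/
lemma arctan_ub_poly : ∀ x : ℝ, 0 ≤ x →
    Real.arctan x ≤ x - x^3/3 + x^5/5 - x^7/7 + x^9/9 := by
  have key : Monotone (fun x : ℝ => (x - x^3/3 + x^5/5 - x^7/7 + x^9/9) - Real.arctan x) := by
    have hd : ∀ x : ℝ, HasDerivAt (fun x : ℝ => (x - x^3/3 + x^5/5 - x^7/7 + x^9/9) - Real.arctan x)
        ((1 - x^2 + x^4 - x^6 + x^8) - 1/(1+x^2)) x := by
      intro x
      have h1 := Real.hasDerivAt_arctan x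
      have h2 : HasDerivAt (fun x : ℝ => x - x^3/3 + x^5/5 - x^7/7 + x^9/9)
          (1 - x^2 + x^4 - x^6 + x^8) x := by
        have := ((((hasDerivAt_id x).sub (((hasDerivAt_pow 3 x)).div_const 3)).add
          ((hasDerivAt_pow 5 x).div_const 5)).sub ((hasDerivAt_pow 7 x).div_const 7)).add
          ((hasDerivAt_pow 9 x).div_const 9)
        refine this.congr_deriv ?_
        norm_num
      exact h2.sub h1
    apply monotone_of_deriv_nonneg
    · exact fun x => (hd x).differentiableAt
    · intro x
      rw [(hd x).deriv]
      have h : (1 - x^2 + x^4 - x^6 + x^8) - 1/(1+x^2) = x^10/(1+x^2) := by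
        field_simp
        ring
      rw [h]
      positivity
  intro x hx
  have := key hx
  simp [Real.arctan_zero] at this
  linarith

lemma lbA : (0.6514 : ℝ) ≤ Real.arctan (Real.sqrt (3/5)) := by
  set s := Real.sqrt (3/5) with hs
  have hs0 : (0:ℝ) ≤ s := Real.sqrt_nonneg _
  have hs2 : s^2 = 3/5 := Real.sq_sqrt (by norm_num)
  have hsl : (0.7745 : ℝ) ≤ s := by
    rw [hs, show (0.7745:ℝ) = Real.sqrt (0.7745^2) by
      rw [Real.sqrt_sq (by norm_num)]]
    exact Real.sqrt_le_sqrt (by norm_num)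
  have h := arctan_lb_poly s hs0
  have e : s - s^3/3 + s^5/5 - s^7/7 = s * (1 - s^2/3 + (s^2)^2/5 - (s^2)^3/7) := by ring
  rw [hs2] at e
  norm_num at e
  nlinarith [h, e, hsl]

lemma ubB : Real.arctan (Real.sqrt (2/3)) ≤ 0.691 := by
  set s := Real.sqrt (2/3) with hs
  have hs0 : (0:ℝ) ≤ s := Real.sqrt_nonneg _
  have hs2 : s^2 = 2/3 := Real.sq_sqrt (by norm_num)
  have hsu : s ≤ (0.8165 : ℝ) := by
    rw [hs, show (0.8165:ℝ) = Real.sqrt (0.8165^2) by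
      rw [Real.sqrt_sq (by norm_num)]]
    exact Real.sqrt_le_sqrt (by norm_num)
  have h := arctan_ub_poly s hs0
  have e : s - s^3/3 + s^5/5 - s^7/7 + s^9/9
      = s * (1 - s^2/3 + (s^2)^2/5 - (s^2)^3/7 + (s^2)^4/9) := by ring
  rw [hs2] at e
  norm_num at e
  nlinarith [h, e, hsu]

lemma lb2' : (0.6119 : ℝ) ≤ Real.arctan (Real.sqrt (1/2)) := by
  set s := Real.sqrt (1/2) with hs
  have hs0 : (0:ℝ) ≤ s := Real.sqrt_nonneg _
  have hs2 : s^2 = 1/2 := Real.sq_sqrt (by norm_num)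
  have hsl : (0.7071 : ℝ) ≤ s := by
    rw [hs, show (0.7071:ℝ) = Real.sqrt (0.7071^2) by
      rw [Real.sqrt_sq (by norm_num)]]
    exact Real.sqrt_le_sqrt (by norm_num)
  have h := arctan_lb_poly s hs0
  have e : s - s^3/3 + s^5/5 - s^7/7 = s * (1 - s^2/3 + (s^2)^2/5 - (s^2)^3/7) := by ring
  rw [hs2] at e
  norm_num at e
  nlinarith [h, e, hsl]

lemma ub2' : Real.arctan (Real.sqrt (1/2)) ≤ 0.6169 := by
  set s := Real.sqrt (1/2) with hs
  have hs0 : (0:ℝ) ≤ s := Real.sqrt_nonneg _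
  have hs2 : s^2 = 1/2 := Real.sq_sqrt (by norm_num)
  have hsu : s ≤ (0.70711 : ℝ) := by
    rw [hs, show (0.70711:ℝ) = Real.sqrt (0.70711^2) by
      rw [Real.sqrt_sq (by norm_num)]]
    exact Real.sqrt_le_sqrt (by norm_num)
  have h := arctan_ub_poly s hs0
  have e : s - s^3/3 + s^5/5 - s^7/7 + s^9/9
      = s * (1 - s^2/3 + (s^2)^2/5 - (s^2)^3/7 + (s^2)^4/9) := by ring
  rw [hs2] at e
  norm_num at e
  nlinarith [h, e, hsu]

lemma fib_L2 (n : ℕ) (hn : 2 ≤ n) : 3 * Nat.fib n ≤ 2 * Nat.fib (n+1) := by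
  obtain ⟨m, rfl⟩ := Nat.exists_eq_add_of_le hn
  have h1 : Nat.fib (2 + m + 1) = Nat.fib (m+1) + Nat.fib (m+2) := by
    rw [show 2 + m + 1 = (m+1) + 2 by ring, Nat.fib_add_two]
  have h2 : Nat.fib (2 + m) = Nat.fib m + Nat.fib (m+1) := by
    rw [show 2 + m = m + 2 by ring, Nat.fib_add_two]
  have h3 : Nat.fib m ≤ Nat.fib (m+1) := Nat.fib_le_fib_succ
  have h4 : Nat.fib (m+2) = Nat.fib m + Nat.fib (m+1) := Nat.fib_add_two
  omega

lemma fib_L1 (n : ℕ) (hn : 3 ≤ n) : 3 * Nat.fib (n+1) ≤ 5 * Nat.fib n := by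
  obtain ⟨m, rfl⟩ := Nat.exists_eq_add_of_le hn
  have h1 : Nat.fib (3 + m + 1) = Nat.fib (m+2) + Nat.fib (m+3) := by
    rw [show 3 + m + 1 = (m+2) + 2 by ring, Nat.fib_add_two]
  have h2 : Nat.fib (3 + m) = Nat.fib (m+3) := by rw [show 3 + m = m + 3 by ring]
  have h3 := fib_L2 (m+2) (by omega)
  have h4 : Nat.fib (m+2+1) = Nat.fib (m+3) := rfl
  omega

lemma theta_lb (n : ℕ) (hn : 3 ≤ n) : (0.6514:ℝ) ≤ theta n := by
  refine lbA.trans ?_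
  apply Real.arctan_strictMono.monotone
  apply Real.sqrt_le_sqrt
  have hb : (0:ℝ) < (Nat.fib (n+1) : ℝ) := by
    exact_mod_cast Nat.fib_pos.mpr (by omega)
  rw [div_le_div_iff₀ (by norm_num) hb]
  have := (Nat.cast_le (α := ℝ)).mpr (fib_L1 n hn)
  push_cast at this
  linarith

lemma theta_ub (n : ℕ) (hn : 3 ≤ n) : theta n ≤ (0.691:ℝ) := by
  refine le_trans ?_ ubB
  apply Real.arctan_strictMono.monotone
  apply Real.sqrt_le_sqrt
  have hb : (0:ℝ) < (Nat.fib (n+1) : ℝ) := by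
    exact_mod_cast Nat.fib_pos.mpr (by omega)
  rw [div_le_div_iff₀ hb (by norm_num)]
  have := (Nat.cast_le (α := ℝ)).mpr (fib_L2 n (by omega))
  push_cast at this
  linarith

lemma theta_one : theta 1 = Real.pi / 4 := by
  norm_num [theta, Nat.fib_one, Real.arctan_one]

lemma theta_two : theta 2 = Real.arctan (Real.sqrt (1/2)) := by
  norm_num [theta, Nat.fib_one]

/-- Ten consecutive triangles of the Fibonacci–Theodorus spiral always turn through
more than 360° but less than 400°. -/
theorem ten_triangles_one_winding :
    ∀ n : ℕ, 0 < n →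
      2 * Real.pi < ∑ i ∈ Finset.range 10, theta (n + i) ∧
        ∑ i ∈ Finset.range 10, theta (n + i) < 20 * Real.pi / 9 := by
  have hpi1 := Real.pi_lt_d2
  have hpi2 := Real.pi_gt_d6
  intro n hn
  match n, hn with
  | 1, _ =>
    rw [show ∑ i ∈ Finset.range 10, theta (1 + i)
        = theta 1 + theta 2 + theta 3 + theta 4 + theta 5 + theta 6 + theta 7 + theta 8
          + theta 9 + theta 10 by
      simp [Finset.sum_range_succ]]
    rw [theta_one, theta_two]
    have l2 := lb2'
    have u2 := ub2'
    have l3 := theta_lb 3 (by norm_num); have u3 := theta_ub 3 (by norm_num)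
    have l4 := theta_lb 4 (by norm_num); have u4 := theta_ub 4 (by norm_num)
    have l5 := theta_lb 5 (by norm_num); have u5 := theta_ub 5 (by norm_num)
    have l6 := theta_lb 6 (by norm_num); have u6 := theta_ub 6 (by norm_num)
    have l7 := theta_lb 7 (by norm_num); have u7 := theta_ub 7 (by norm_num)
    have l8 := theta_lb 8 (by norm_num); have u8 := theta_ub 8 (by norm_num)
    have l9 := theta_lb 9 (by norm_num); have u9 := theta_ub 9 (by norm_num)
    have l10 := theta_lb 10 (by norm_num); have u10 := theta_ub 10 (by norm_num)
    constructor <;> linarith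
  | 2, _ =>
    rw [show ∑ i ∈ Finset.range 10, theta (2 + i)
        = theta 2 + theta 3 + theta 4 + theta 5 + theta 6 + theta 7 + theta 8
          + theta 9 + theta 10 + theta 11 by
      simp [Finset.sum_range_succ]]
    rw [theta_two]
    have l2 := lb2'
    have u2 := ub2'
    have l3 := theta_lb 3 (by norm_num); have u3 := theta_ub 3 (by norm_num)
    have l4 := theta_lb 4 (by norm_num); have u4 := theta_ub 4 (by norm_num)
    have l5 := theta_lb 5 (by norm_num); have u5 := theta_ub 5 (by norm_num)
    have l6 := theta_lb 6 (by norm_num); have u6 := theta_ub 6 (by norm_num)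
    have l7 := theta_lb 7 (by norm_num); have u7 := theta_ub 7 (by norm_num)
    have l8 := theta_lb 8 (by norm_num); have u8 := theta_ub 8 (by norm_num)
    have l9 := theta_lb 9 (by norm_num); have u9 := theta_ub 9 (by norm_num)
    have l10 := theta_lb 10 (by norm_num); have u10 := theta_ub 10 (by norm_num)
    have l11 := theta_lb 11 (by norm_num); have u11 := theta_ub 11 (by norm_num)
    constructor <;> linarith
  | (m+3), _ =>
    have hl : ∀ i ∈ Finset.range 10, (0.6514:ℝ) ≤ theta (m+3+i) :=
      fun i _ => theta_lb _ (by omega)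
    have hu : ∀ i ∈ Finset.range 10, theta (m+3+i) ≤ (0.691:ℝ) :=
      fun i _ => theta_ub _ (by omega)
    have h1 : (6.514:ℝ) ≤ ∑ i ∈ Finset.range 10, theta (m+3+i) := by
      calc (6.514:ℝ) = ∑ _i ∈ Finset.range 10, (0.6514:ℝ) := by
            simp; norm_num
        _ ≤ _ := Finset.sum_le_sum hl
    have h2 : ∑ i ∈ Finset.range 10, theta (m+3+i) ≤ (6.91:ℝ) := by
      calc ∑ i ∈ Finset.range 10, theta (m+3+i)
          ≤ ∑ _i ∈ Finset.range 10, (0.691:ℝ) := Finset.sum_le_sum hu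
        _ = (6.91:ℝ) := by simp; norm_num
    constructor <;> linarith
end
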